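/- arXiv:1109.0960 — 4 statements merged into one kernel-verified Lean document; each statement's English description precedes it below -/
import Mathlib

section
/- If rational numbers k₁, k₂, k₇ satisfy k₇ = k₁⁸k₂⁸ = k₁¹⁸k₂ = k₂¹³, then either k₂ = 0, or (k₁ = 1 ∧ k₂ = 1), or (k₁ = -1 ∧ k₂ = 1). -/
/-- The coefficient equations arising from an endomorphism of the inflexible Sullivan
algebras force `k₂ = 0` or `k₁ = ±1, k₂ = 1`. -/
theorem inflexible_coefficient_equations (k₁ k₂ k₇ : ℚ)
    (h₁ : k₇ = k₁ ^ 8 * k₂ ^ 8) (h₂ : k₇ = k₁ ^ 18 * k₂) (h₃ : k₇ = k₂ ^ 13) :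
    k₂ = 0 ∨ (k₁ = 1 ∧ k₂ = 1) ∨ (k₁ = -1 ∧ k₂ = 1) := by
  by_cases hk₂ : k₂ = 0
  · exact Or.inl hk₂
  right
  -- From h₁ = h₃ : k₁^8 * k₂^8 = k₂^13, cancel k₂^8
  have e1 : k₁ ^ 8 = k₂ ^ 5 := by
    have h : k₁ ^ 8 * k₂ ^ 8 = k₂ ^ 5 * k₂ ^ 8 := by
      rw [← h₁, h₃]; ring
    exact mul_right_cancel₀ (pow_ne_zero 8 hk₂) h
  have e2 : k₁ ^ 18 = k₂ ^ 12 := by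
    have h : k₁ ^ 18 * k₂ = k₂ ^ 12 * k₂ := by
      rw [← h₂, h₃]; ring
    exact mul_right_cancel₀ hk₂ h
  -- k₂^45 = (k₁^8)^9 = k₁^72 = (k₁^18)^4 = k₂^48
  have e3 : k₂ ^ 45 = k₂ ^ 48 := by
    have : (k₁ ^ 8) ^ 9 = (k₁ ^ 18) ^ 4 := by ring
    rw [e1, e2] at this
    calc k₂ ^ 45 = (k₂ ^ 5) ^ 9 := by ring
      _ = (k₂ ^ 12) ^ 4 := this
      _ = k₂ ^ 48 := by ring
  have hcube : k₂ ^ 3 = 1 := by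
    have h45 : k₂ ^ 45 ≠ 0 := pow_ne_zero _ hk₂
    have : k₂ ^ 45 * 1 = k₂ ^ 45 * k₂ ^ 3 := by
      linear_combination e3
    exact (mul_left_cancel₀ h45 this).symm
  have hk₂1 : k₂ = 1 := by nlinarith [sq_nonneg (k₂ - 1), sq_nonneg (k₂ + 1), sq_nonneg k₂]
  subst hk₂1
  have e1' : k₁ ^ 8 = 1 := by simpa using e1
  have hsq : k₁ ^ 2 = 1 := by nlinarith [sq_nonneg (k₁ ^ 2 - 1), sq_nonneg (k₁ ^ 3 - k₁), sq_nonneg k₁, sq_nonneg (k₁ ^ 2), sq_nonneg (k₁ ^ 3)]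
  have : (k₁ - 1) * (k₁ + 1) = 0 := by nlinarith
  rcases mul_eq_zero.mp this with h | h
  · exact Or.inl ⟨by linarith, rfl⟩
  · exact Or.inr ⟨by linarith, rfl⟩
end

section
/- In the free graded-commutative ℚ-algebra on generators x₁ (degree 4), x₂ (degree 6), y₁ (degree 27), y₂ (degree 29), y₃ (degree 31), z (degree 77), z' (degree 75+4i), the derivation d determined by dx₁ = dx₂ = 0, dy₁ = x₁⁴x₂², dy₂ = x₁³x₂³, dy₃ = x₁²x₂⁴, dz = x₁x₂³y₁y₂ - x₁²x₂²y₁y₃ + x₁³x₂y₂y₃ + x₂x₁¹⁸ + x₂¹³, dz' = x₁^(19+i) satisfies d² = 0. -/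
/-- In the free graded-commutative ℚ-algebra on `x₁` (deg 4), `x₂` (deg 6), `y₁` (deg 27),
`y₂` (deg 29), `y₃` (deg 31), `z` (deg 77), `z'` (deg 75 + 4i), the degree `+1` derivation
`d` (extending its values on generators by the graded Leibniz rule) determined by
`dx₁ = dx₂ = 0`, `dy₁ = x₁⁴x₂²`, `dy₂ = x₁³x₂³`, `dy₃ = x₁²x₂⁴`,
`dz = x₁x₂³y₁y₂ - x₁²x₂²y₁y₃ + x₁³x₂y₂y₃ + x₂x₁¹⁸ + x₂¹³`, `dz' = x₁^(19+i)`
satisfies `d² = 0`. -/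
theorem d_squared_eq_zero (i : ℕ) (A : Type) [Ring A] [Algebra ℚ A]
    (𝒜 : ℕ → Submodule ℚ A) [GradedAlgebra 𝒜]
    (x₁ x₂ y₁ y₂ y₃ z z' : A)
    (hx₁ : x₁ ∈ 𝒜 4) (hx₂ : x₂ ∈ 𝒜 6)
    (hy₁ : y₁ ∈ 𝒜 27) (hy₂ : y₂ ∈ 𝒜 29) (hy₃ : y₃ ∈ 𝒜 31)
    (hz : z ∈ 𝒜 77) (hz' : z' ∈ 𝒜 (75 + 4 * i))
    -- graded commutativity of the algebra
    (hcomm : ∀ (p q : ℕ) (a b : A), a ∈ 𝒜 p → b ∈ 𝒜 q →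
      a * b = ((-1 : ℚ) ^ (p * q)) • (b * a))
    -- the algebra is generated by the listed generators
    (hgen : Algebra.adjoin ℚ ({x₁, x₂, y₁, y₂, y₃, z, z'} : Set A) = ⊤)
    (d : A →ₗ[ℚ] A)
    (hdeg : ∀ (p : ℕ), ∀ a ∈ 𝒜 p, d a ∈ 𝒜 (p + 1))
    -- graded Leibniz rule
    (hLeibniz : ∀ (p : ℕ), ∀ a ∈ 𝒜 p, ∀ b : A,
      d (a * b) = d a * b + ((-1 : ℚ) ^ p) • (a * d b))
    (hdx₁ : d x₁ = 0) (hdx₂ : d x₂ = 0)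
    (hdy₁ : d y₁ = x₁ ^ 4 * x₂ ^ 2)
    (hdy₂ : d y₂ = x₁ ^ 3 * x₂ ^ 3)
    (hdy₃ : d y₃ = x₁ ^ 2 * x₂ ^ 4)
    (hdz : d z = x₁ * x₂ ^ 3 * y₁ * y₂ - x₁ ^ 2 * x₂ ^ 2 * y₁ * y₃
      + x₁ ^ 3 * x₂ * y₂ * y₃ + x₂ * x₁ ^ 18 + x₂ ^ 13)
    (hdz' : d z' = x₁ ^ (19 + i)) :
    ∀ a : A, d (d a) = 0 := by
  -- basic facts
  have hd1 : d (1 : A) = 0 := by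
    have h := hLeibniz 0 1 (SetLike.one_mem_graded 𝒜) 1
    simp only [one_mul, mul_one, pow_zero, one_smul] at h
    have h2 : d (1 : A) + 0 = d 1 + d 1 := by rw [add_zero]; exact h
    exact (add_left_cancel h2).symm
  have hmul0 : ∀ (p : ℕ) (a : A), a ∈ 𝒜 p → d a = 0 → ∀ b : A, d b = 0 →
      d (a * b) = 0 := by
    intro p a ha hda b hdb
    rw [hLeibniz p a ha b, hda, hdb, mul_zero, smul_zero, zero_mul, add_zero]
  have hx1p : ∀ n : ℕ, x₁ ^ n ∈ 𝒜 (4 * n) := by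
    intro n
    have := SetLike.pow_mem_graded n hx₁
    simpa [smul_eq_mul, Nat.mul_comm] using this
  have hx2p : ∀ n : ℕ, x₂ ^ n ∈ 𝒜 (6 * n) := by
    intro n
    have := SetLike.pow_mem_graded n hx₂
    simpa [smul_eq_mul, Nat.mul_comm] using this
  have hdx1p : ∀ n : ℕ, d (x₁ ^ n) = 0 := by
    intro n
    induction n with
    | zero => simpa using hd1
    | succ n ih =>
      rw [pow_succ]
      exact hmul0 (4 * n) (x₁ ^ n) (hx1p n) ih x₁ hdx₁
  have hdx2p : ∀ n : ℕ, d (x₂ ^ n) = 0 := by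
    intro n
    induction n with
    | zero => simpa using hd1
    | succ n ih =>
      rw [pow_succ]
      exact hmul0 (6 * n) (x₂ ^ n) (hx2p n) ih x₂ hdx₂
  have hmono : ∀ m n : ℕ, x₁ ^ m * x₂ ^ n ∈ 𝒜 (4 * m + 6 * n) := fun m n =>
    SetLike.mul_mem_graded (hx1p m) (hx2p n)
  have hdmono : ∀ m n : ℕ, d (x₁ ^ m * x₂ ^ n) = 0 := fun m n =>
    hmul0 (4 * m) (x₁ ^ m) (hx1p m) (hdx1p m) (x₂ ^ n) (hdx2p n)
  -- x₁ and x₂ commute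
  have hc : Commute x₁ x₂ := by
    have h := hcomm 4 6 x₁ x₂ hx₁ hx₂
    norm_num at h
    exact h
  have hmerge : ∀ a b c e : ℕ,
      (x₁ ^ a * x₂ ^ b) * (x₁ ^ c * x₂ ^ e) = x₁ ^ (a + c) * x₂ ^ (b + e) := by
    intro a b c e
    rw [mul_assoc, ← mul_assoc (x₂ ^ b) (x₁ ^ c), ← (hc.pow_pow c b).eq,
      mul_assoc (x₁ ^ c), ← mul_assoc (x₁ ^ a), ← pow_add, ← pow_add]
  -- anything homogeneous commutes with the even monomials in x₁, x₂
  have hycomm : ∀ (p : ℕ) (w : A), w ∈ 𝒜 p → ∀ m n : ℕ,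
      w * (x₁ ^ m * x₂ ^ n) = (x₁ ^ m * x₂ ^ n) * w := by
    intro p w hw m n
    rw [hcomm p (4 * m + 6 * n) w _ hw (hmono m n)]
    have hev : Even (p * (4 * m + 6 * n)) := ⟨p * (2 * m + 3 * n), by ring⟩
    rw [hev.neg_one_pow, one_smul]
  -- key computation for the quadratic terms of dz
  have key : ∀ (m n a b c e pu pv : ℕ) (u v : A), u ∈ 𝒜 pu → v ∈ 𝒜 pv →
      Odd pu → d u = x₁ ^ a * x₂ ^ b → d v = x₁ ^ c * x₂ ^ e →
      d (x₁ ^ m * x₂ ^ n * u * v)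
        = x₁ ^ (m + a) * x₂ ^ (n + b) * v - x₁ ^ (m + c) * x₂ ^ (n + e) * u := by
    intro m n a b c e pu pv u v hu hv hpu hdu hdv
    have hmu : x₁ ^ m * x₂ ^ n * u ∈ 𝒜 (4 * m + 6 * n + pu) :=
      SetLike.mul_mem_graded (hmono m n) hu
    rw [hLeibniz (4 * m + 6 * n + pu) _ hmu v,
      hLeibniz (4 * m + 6 * n) _ (hmono m n) u, hdmono, hdu, hdv, zero_mul, zero_add]
    have hevmn : Even (4 * m + 6 * n) := ⟨2 * m + 3 * n, by ring⟩
    have hodd : Odd (4 * m + 6 * n + pu) := hevmn.add_odd hpu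
    rw [hevmn.neg_one_pow, hodd.neg_one_pow, one_smul, neg_one_smul,
      hmerge m n a b, mul_assoc (x₁ ^ m * x₂ ^ n) u (x₁ ^ c * x₂ ^ e),
      hycomm pu u hu c e, ← mul_assoc (x₁ ^ m * x₂ ^ n) (x₁ ^ c * x₂ ^ e) u,
      hmerge m n c e, sub_eq_add_neg]
  -- d² vanishes on each generator
  have hddz : d (d z) = 0 := by
    rw [hdz]
    rw [map_add, map_add, map_add, map_sub]
    rw [hmul0 6 x₂ hx₂ hdx₂ (x₁ ^ 18) (hdx1p 18), hdx2p 13]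
    have e1 : d (x₁ * x₂ ^ 3 * y₁ * y₂)
        = x₁ ^ 5 * x₂ ^ 5 * y₂ - x₁ ^ 4 * x₂ ^ 6 * y₁ := by
      rw [show x₁ * x₂ ^ 3 = x₁ ^ 1 * x₂ ^ 3 by rw [pow_one]]
      exact key 1 3 4 2 3 3 27 29 y₁ y₂ hy₁ hy₂ (by decide) hdy₁ hdy₂
    have e2 : d (x₁ ^ 2 * x₂ ^ 2 * y₁ * y₃)
        = x₁ ^ 6 * x₂ ^ 4 * y₃ - x₁ ^ 4 * x₂ ^ 6 * y₁ :=
      key 2 2 4 2 2 4 27 31 y₁ y₃ hy₁ hy₃ (by decide) hdy₁ hdy₃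
    have e3 : d (x₁ ^ 3 * x₂ * y₂ * y₃)
        = x₁ ^ 6 * x₂ ^ 4 * y₃ - x₁ ^ 5 * x₂ ^ 5 * y₂ := by
      rw [show x₁ ^ 3 * x₂ = x₁ ^ 3 * x₂ ^ 1 by rw [pow_one]]
      exact key 3 1 3 3 2 4 29 31 y₂ y₃ hy₂ hy₃ (by decide) hdy₂ hdy₃
    rw [e1, e2, e3]
    abel
  -- the set of homogeneous elements killed by d²
  set T : Set A := {a | (∃ p, a ∈ 𝒜 p) ∧ d (d a) = 0} with hT
  have h1T : (1 : A) ∈ T := ⟨⟨0, SetLike.one_mem_graded 𝒜⟩, by rw [hd1, map_zero]⟩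
  have hTmul : ∀ a ∈ T, ∀ b ∈ T, a * b ∈ T := by
    rintro a ⟨⟨p, hp⟩, hda⟩ b ⟨⟨q, hq⟩, hdb⟩
    refine ⟨⟨p + q, SetLike.mul_mem_graded hp hq⟩, ?_⟩
    rw [hLeibniz p a hp b, map_add, map_smul,
      hLeibniz (p + 1) (d a) (hdeg p a hp) b, hLeibniz p a hp (d b), hda, hdb,
      zero_mul, mul_zero, smul_zero, add_zero, zero_add]
    have : ((-1 : ℚ)) ^ (p + 1) = -((-1 : ℚ) ^ p) := by rw [pow_succ]; ring
    rw [this, neg_smul]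
    abel
  set M : Submodule ℚ A := Submodule.span ℚ T with hM
  have hTM : T ⊆ (M : Set A) := Submodule.subset_span
  have hMmul : ∀ a b : A, a ∈ M → b ∈ M → a * b ∈ M := by
    intro a b ha hb
    induction ha using Submodule.span_induction with
    | mem x hx =>
      induction hb using Submodule.span_induction with
      | mem y hy => exact hTM (hTmul x hx y hy)
      | zero => rw [mul_zero]; exact M.zero_mem
      | add y₁' y₂' _ _ h1 h2 => rw [mul_add]; exact M.add_mem h1 h2
      | smul r y _ h1 => rw [mul_smul_comm]; exact M.smul_mem r h1
    | zero => rw [zero_mul]; exact M.zero_mem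
    | add a₁ a₂ _ _ h1 h2 => rw [add_mul]; exact M.add_mem h1 h2
    | smul r a' _ h1 => rw [smul_mul_assoc]; exact M.smul_mem r h1
  intro a
  have haM : a ∈ M := by
    have ha : a ∈ Algebra.adjoin ℚ ({x₁, x₂, y₁, y₂, y₃, z, z'} : Set A) := by
      rw [hgen]; trivial
    induction ha using Algebra.adjoin_induction with
    | mem w hw =>
      apply hTM
      rcases hw with h | h | h | h | h | h | h
      · exact h ▸ ⟨⟨4, hx₁⟩, by rw [hdx₁, map_zero]⟩
      · exact h ▸ ⟨⟨6, hx₂⟩, by rw [hdx₂, map_zero]⟩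
      · exact h ▸ ⟨⟨27, hy₁⟩, by rw [hdy₁, hdmono]⟩
      · exact h ▸ ⟨⟨29, hy₂⟩, by rw [hdy₂, hdmono]⟩
      · exact h ▸ ⟨⟨31, hy₃⟩, by rw [hdy₃, hdmono]⟩
      · exact h ▸ ⟨⟨77, hz⟩, hddz⟩
      · have h' : w = z' := h
        exact h' ▸ ⟨⟨75 + 4 * i, hz'⟩, by rw [hdz', hdx1p]⟩
    | algebraMap r =>
      rw [Algebra.algebraMap_eq_smul_one]
      exact M.smul_mem r (hTM h1T)
    | add u v _ _ hu hv => exact M.add_mem hu hv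
    | mul u v _ _ hu hv => exact hMmul u v hu hv
  have hker : M ≤ LinearMap.ker (d ∘ₗ d) := by
    rw [hM, Submodule.span_le]
    intro t ht
    exact LinearMap.mem_ker.mpr ht.2
  exact hker haM
end

section
/- If rationals k₁, k₂, k₃, k₄ satisfy k₄ = k₁²k₂² + 3k₂²k₃, k₄ = k₂³, 2k₁²k₂k₃ + 3k₂k₃² = 0, and k₁²k₃² + k₃³ = 0, then either k₂ = 0, or k₁ = 0, or (k₃ = 0, k₂ = k₁², and k₄ = k₁⁶). -/
/-- The coefficient relations forced on any endomorphism of the minimal Sullivan model of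
the dimension `4k + 43` examples. -/
theorem coefficient_equations_prop3 (k₁ k₂ k₃ k₄ : ℚ)
    (h₁ : k₄ = k₁ ^ 2 * k₂ ^ 2 + 3 * k₂ ^ 2 * k₃)
    (h₂ : k₄ = k₂ ^ 3)
    (h₃ : 2 * k₁ ^ 2 * k₂ * k₃ + 3 * k₂ * k₃ ^ 2 = 0)
    (h₄ : k₁ ^ 2 * k₃ ^ 2 + k₃ ^ 3 = 0) :
    k₂ = 0 ∨ k₁ = 0 ∨ (k₃ = 0 ∧ k₂ = k₁ ^ 2 ∧ k₄ = k₁ ^ 6) := by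
  by_cases h2 : k₂ = 0
  · exact Or.inl h2
  by_cases h1 : k₁ = 0
  · exact Or.inr (Or.inl h1)
  right; right
  have hk3 : k₃ = 0 := by
    by_contra h3
    have e3 : 2 * k₁ ^ 2 + 3 * k₃ = 0 := by
      have := mul_left_cancel₀ (mul_ne_zero h2 h3) (by linear_combination h₃ : k₂ * k₃ * (2 * k₁ ^ 2 + 3 * k₃) = k₂ * k₃ * 0)
      simpa using this
    have e4 : k₁ ^ 2 + k₃ = 0 := by
      have := mul_left_cancel₀ (pow_ne_zero 2 h3) (by linear_combination h₄ : k₃ ^ 2 * (k₁ ^ 2 + k₃) = k₃ ^ 2 * 0)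
      simpa using this
    have : k₁ ^ 2 = 0 := by linarith
    exact h1 (pow_eq_zero_iff (by norm_num)|>.mp this)
  have hk2 : k₂ = k₁ ^ 2 := by
    have h := h₁.symm.trans h₂
    rw [hk3] at h
    have := mul_left_cancel₀ (pow_ne_zero 2 h2) (by linear_combination h : k₂ ^ 2 * k₁ ^ 2 = k₂ ^ 2 * k₂)
    exact this.symm
  exact ⟨hk3, hk2, by rw [h₂, hk2]; ring⟩
end

section
/- In the free graded-commutative ℚ-algebra on x₁ (deg 2), x₂ (deg 4), n₁ (deg 11), n₂ (deg 11), n₃ (deg 4l₁+1), n₄ (deg 8l₂+3) with dx₁ = dx₂ = 0, dn₁ = x₁⁴x₂, dn₂ = x₁²x₂² + x₂³, dn₃ = x₁^(2l₁+1), dn₄ = x₂^(2l₂+1) (where l₁, l₂ ≥ 2), the element v = x₁^(2l₁)x₂^(2l₂)n₁n₂ - (x₁^(2l₁+2)x₂ + x₁^(2l₁)x₂²)n₁n₄ + x₁^(2l₁+4)n₂n₄ is closed: d(v) = 0. -/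
private lemma cid1 {S : Type} [CommRing S] (X Y : S) (a b : ℕ) :
    X^a * Y^b * (X^4*Y) = X^(a+4) * Y^(b+1) := by ring

private lemma cid2 {S : Type} [CommRing S] (X Y : S) (a b : ℕ) :
    X^a * Y^b * (X^2*Y^2 + Y^3) = (X^(a+2)*Y + X^a*Y^2) * Y^(b+1) := by ring

private lemma cid3 {S : Type} [CommRing S] (X Y : S) (a b : ℕ) :
    (X^(a+2)*Y + X^a*Y^2) * (X^4*Y) = X^(a+4) * (X^2*Y^2 + Y^3) := by ring

private lemma comm_ids {R : Type} [Ring R] (x y : R) (h : x * y = y * x) (a b : ℕ) :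
    x^a * y^b * (x^4*y) = x^(a+4) * y^(b+1) ∧
    x^a * y^b * (x^2*y^2 + y^3) = (x^(a+2)*y + x^a*y^2) * y^(b+1) ∧
    (x^(a+2)*y + x^a*y^2) * (x^4*y) = x^(a+4) * (x^2*y^2 + y^3) := by
  have hc : ∀ u ∈ ({x, y} : Set R), ∀ v ∈ ({x, y} : Set R), u * v = v * u := by
    rintro u (rfl|rfl) v (rfl|rfl)
    · rfl
    · exact h
    · exact h.symm
    · rfl
  have hx : x ∈ Subring.closure ({x, y} : Set R) := Subring.subset_closure (by simp)
  have hy : y ∈ Subring.closure ({x, y} : Set R) := Subring.subset_closure (by simp)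
  refine ⟨?_, ?_, ?_⟩
  · simpa only [MulMemClass.coe_mul, SubmonoidClass.coe_pow, AddMemClass.coe_add] using
      congrArg Subtype.val (@cid1 _ (Subring.closureCommRingOfComm hc) ⟨x,hx⟩ ⟨y,hy⟩ a b)
  · simpa only [MulMemClass.coe_mul, SubmonoidClass.coe_pow, AddMemClass.coe_add] using
      congrArg Subtype.val (@cid2 _ (Subring.closureCommRingOfComm hc) ⟨x,hx⟩ ⟨y,hy⟩ a b)
  · simpa only [MulMemClass.coe_mul, SubmonoidClass.coe_pow, AddMemClass.coe_add] using
      congrArg Subtype.val (@cid3 _ (Subring.closureCommRingOfComm hc) ⟨x,hx⟩ ⟨y,hy⟩ a b)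

/-- In the free graded-commutative ℚ-algebra on `x₁` (deg 2), `x₂` (deg 4), `n₁, n₂` (deg 11),
`n₃` (deg 4l₁+1), `n₄` (deg 8l₂+3) with `dx₁ = dx₂ = 0`, `dn₁ = x₁⁴x₂`,
`dn₂ = x₁²x₂² + x₂³`, `dn₃ = x₁^(2l₁+1)`, `dn₄ = x₂^(2l₂+1)` (where `l₁, l₂ ≥ 2`),
the element
`v = x₁^(2l₁)x₂^(2l₂)n₁n₂ - (x₁^(2l₁+2)x₂ + x₁^(2l₁)x₂²)n₁n₄ + x₁^(2l₁+4)n₂n₄`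
is closed: `d v = 0`. -/
theorem volume_form_closed_prop1 (l₁ l₂ : ℕ) (hl₁ : 2 ≤ l₁) (hl₂ : 2 ≤ l₂)
    (A : Type) [Ring A] [Algebra ℚ A]
    (𝒜 : ℕ → Submodule ℚ A) [GradedAlgebra 𝒜]
    (x₁ x₂ n₁ n₂ n₃ n₄ : A)
    (hx₁ : x₁ ∈ 𝒜 2) (hx₂ : x₂ ∈ 𝒜 4)
    (hn₁ : n₁ ∈ 𝒜 11) (hn₂ : n₂ ∈ 𝒜 11)
    (hn₃ : n₃ ∈ 𝒜 (4 * l₁ + 1)) (hn₄ : n₄ ∈ 𝒜 (8 * l₂ + 3))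
    (hcomm : ∀ (p q : ℕ) (a b : A), a ∈ 𝒜 p → b ∈ 𝒜 q →
      a * b = ((-1 : ℚ) ^ (p * q)) • (b * a))
    (hgen : Algebra.adjoin ℚ ({x₁, x₂, n₁, n₂, n₃, n₄} : Set A) = ⊤)
    (d : A →ₗ[ℚ] A)
    (hdeg : ∀ (p : ℕ), ∀ a ∈ 𝒜 p, d a ∈ 𝒜 (p + 1))
    (hLeibniz : ∀ (p : ℕ), ∀ a ∈ 𝒜 p, ∀ b : A,
      d (a * b) = d a * b + ((-1 : ℚ) ^ p) • (a * d b))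
    (hdx₁ : d x₁ = 0) (hdx₂ : d x₂ = 0)
    (hdn₁ : d n₁ = x₁ ^ 4 * x₂)
    (hdn₂ : d n₂ = x₁ ^ 2 * x₂ ^ 2 + x₂ ^ 3)
    (hdn₃ : d n₃ = x₁ ^ (2 * l₁ + 1))
    (hdn₄ : d n₄ = x₂ ^ (2 * l₂ + 1)) :
    d (x₁ ^ (2 * l₁) * x₂ ^ (2 * l₂) * n₁ * n₂
        - (x₁ ^ (2 * l₁ + 2) * x₂ + x₁ ^ (2 * l₁) * x₂ ^ 2) * n₁ * n₄
        + x₁ ^ (2 * l₁ + 4) * n₂ * n₄) = 0 := by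
  -- x₁ and x₂ commute
  have hC : x₁ * x₂ = x₂ * x₁ := by
    have h := hcomm 2 4 x₁ x₂ hx₁ hx₂
    norm_num at h
    exact h
  -- d 1 = 0
  have hone : d 1 = 0 := by
    have h := hLeibniz 0 1 (SetLike.one_mem_graded 𝒜) 1
    simp only [one_mul, mul_one, pow_zero, one_smul] at h
    exact left_eq_add.mp h
  -- powers of x₁ are closed
  have dp1 : ∀ k, d (x₁^k) = 0 := by
    intro k
    induction k with
    | zero => simpa using hone
    | succ n ih =>
      have h := hLeibniz 2 x₁ hx₁ (x₁^n)
      rw [hdx₁, ih, zero_mul, mul_zero, smul_zero, zero_add] at h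
      rw [pow_succ', h]
  have dp2 : ∀ k, d (x₂^k) = 0 := by
    intro k
    induction k with
    | zero => simpa using hone
    | succ n ih =>
      have h := hLeibniz 4 x₂ hx₂ (x₂^n)
      rw [hdx₂, ih, zero_mul, mul_zero, smul_zero, zero_add] at h
      rw [pow_succ', h]
  -- derivation over even closed elements
  have devenmul : ∀ (k : ℕ) (c : A), c ∈ 𝒜 (2*k) → d c = 0 → ∀ m : A,
      d (c * m) = c * d m := by
    intro k c hc hdc m
    rw [hLeibniz (2*k) c hc m, hdc, zero_mul, zero_add, pow_mul]
    norm_num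
  -- anything commutes with even-degree elements
  have oddeven : ∀ (p : ℕ) (m : A), m ∈ 𝒜 p → ∀ (k : ℕ) (c : A), c ∈ 𝒜 (2*k) →
      m * c = c * m := by
    intro p m hm k c hc
    rw [hcomm p (2*k) m c hm hc, show p*(2*k) = 2*(p*k) from by ring, pow_mul]
    norm_num
  -- memberships
  have mx1 : ∀ k, x₁^k ∈ 𝒜 (2*k) := by
    intro k
    have h := SetLike.pow_mem_graded k hx₁
    rw [show k • 2 = 2*k from by rw [smul_eq_mul, Nat.mul_comm]] at h
    exact h
  have mx2 : ∀ k, x₂^k ∈ 𝒜 (4*k) := by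
    intro k
    have h := SetLike.pow_mem_graded k hx₂
    rw [show k • 4 = 4*k from by rw [smul_eq_mul, Nat.mul_comm]] at h
    exact h
  have mm : ∀ i j, x₁^i * x₂^j ∈ 𝒜 (2*(i+2*j)) := by
    intro i j
    have h := SetLike.mul_mem_graded (mx1 i) (mx2 j)
    rw [show 2*i + 4*j = 2*(i+2*j) from by ring] at h
    exact h
  -- monomials are closed
  have dm : ∀ i j, d (x₁^i * x₂^j) = 0 := by
    intro i j
    rw [devenmul i (x₁^i) (mx1 i) (dp1 i) (x₂^j), dp2 j, mul_zero]
  -- derivatives of products of odd generators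
  have d12 : d (n₁*n₂) = (x₁^4*x₂)*n₂ - n₁*(x₁^2*x₂^2+x₂^3) := by
    rw [hLeibniz 11 n₁ hn₁ n₂, hdn₁, hdn₂]
    norm_num [sub_eq_add_neg]
  have d14 : d (n₁*n₄) = (x₁^4*x₂)*n₄ - n₁*(x₂^(2*l₂+1)) := by
    rw [hLeibniz 11 n₁ hn₁ n₄, hdn₁, hdn₄]
    norm_num [sub_eq_add_neg]
  have d24 : d (n₂*n₄) = (x₁^2*x₂^2+x₂^3)*n₄ - n₂*(x₂^(2*l₂+1)) := by
    rw [hLeibniz 11 n₂ hn₂ n₄, hdn₂, hdn₄]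
    norm_num [sub_eq_add_neg]
  -- the three terms
  have T1 : d (x₁^(2*l₁) * x₂^(2*l₂) * n₁ * n₂)
      = x₁^(2*l₁) * x₂^(2*l₂) * ((x₁^4*x₂)*n₂ - n₁*(x₁^2*x₂^2+x₂^3)) := by
    rw [mul_assoc (x₁^(2*l₁) * x₂^(2*l₂)),
      devenmul _ _ (mm (2*l₁) (2*l₂)) (dm _ _), d12]
  have mB1 : x₁^(2*l₁+2)*x₂ ∈ 𝒜 (2*(2*l₁+4)) := by
    have h := mm (2*l₁+2) 1
    rw [show (2*l₁+2)+2*1 = 2*l₁+4 from by ring] at h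
    simpa using h
  have mB2 : x₁^(2*l₁)*x₂^2 ∈ 𝒜 (2*(2*l₁+4)) := by
    have h := mm (2*l₁) 2
    rw [show (2*l₁)+2*2 = 2*l₁+4 from by ring] at h
    exact h
  have dB : d (x₁^(2*l₁+2)*x₂ + x₁^(2*l₁)*x₂^2) = 0 := by
    have h1 : d (x₁^(2*l₁+2)*x₂) = 0 := by simpa using dm (2*l₁+2) 1
    rw [map_add, h1, dm (2*l₁) 2, add_zero]
  have T2 : d ((x₁^(2*l₁+2)*x₂ + x₁^(2*l₁)*x₂^2) * n₁ * n₄)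
      = (x₁^(2*l₁+2)*x₂ + x₁^(2*l₁)*x₂^2) * ((x₁^4*x₂)*n₄ - n₁*(x₂^(2*l₂+1))) := by
    rw [mul_assoc (x₁^(2*l₁+2)*x₂ + x₁^(2*l₁)*x₂^2),
      devenmul _ _ (add_mem mB1 mB2) dB, d14]
  have T3 : d (x₁^(2*l₁+4) * n₂ * n₄)
      = x₁^(2*l₁+4) * ((x₁^2*x₂^2+x₂^3)*n₄ - n₂*(x₂^(2*l₂+1))) := by
    rw [mul_assoc (x₁^(2*l₁+4)),
      devenmul _ _ (mx1 (2*l₁+4)) (dp1 _), d24]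
  -- commuting odd generators past even elements
  have hQ : (x₁^2*x₂^2+x₂^3) ∈ 𝒜 (2*6) := by
    have q1 := mm 2 2
    rw [show 2*(2+2*2) = 2*6 from by norm_num] at q1
    have q2 := mx2 3
    rw [show 4*3 = 2*6 from by norm_num] at q2
    exact add_mem q1 q2
  have hR : x₂^(2*l₂+1) ∈ 𝒜 (2*(2*(2*l₂+1))) := by
    have h := mx2 (2*l₂+1)
    rw [show 4*(2*l₂+1) = 2*(2*(2*l₂+1)) from by ring] at h
    exact h
  have c1Q : n₁*(x₁^2*x₂^2+x₂^3) = (x₁^2*x₂^2+x₂^3)*n₁ := oddeven 11 n₁ hn₁ 6 _ hQ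
  have c1R : n₁*(x₂^(2*l₂+1)) = (x₂^(2*l₂+1))*n₁ := oddeven 11 n₁ hn₁ _ _ hR
  have c2R : n₂*(x₂^(2*l₂+1)) = (x₂^(2*l₂+1))*n₂ := oddeven 11 n₂ hn₂ _ _ hR
  -- put it together
  obtain ⟨e1, e2, e3⟩ := comm_ids x₁ x₂ hC (2*l₁) (2*l₂)
  rw [map_add, map_sub, T1, T2, T3, c1Q, c1R, c2R]
  simp only [mul_sub, ← mul_assoc]
  simp only [← mul_assoc] at e1 e2 e3
  rw [e1, e2, e3]
  abel
end
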